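/- Let M, N be positive integers. The following are equivalent: (i) there exists a Stieltjes moment sequence {a_n}_{n=0}^∞ with representing measure μ satisfying supp μ ⊆ (0,∞) and card(supp μ) = M, such that {√(a_n)}_{n=0}^∞ is a Stieltjes moment sequence with a representing measure ν satisfying supp ν ⊆ (0,∞) and card(supp ν) = N; (ii) 2N − 1 ≤ M ≤ N(N+1)/2; (iii) ⌈(√(8M+1) − 1)/2⌉ ≤ N ≤ ⌊(M+1)/2⌋. -/

import Mathlib

open MeasureTheory Filter

/-- The closed support of a Borel measure: the set of points all of whose open
neighbourhoods have positive measure. -/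
def msupport {X : Type*} [TopologicalSpace X] [MeasurableSpace X] (μ : Measure X) : Set X :=
  {x | ∀ U : Set X, IsOpen U → x ∈ U → 0 < μ U}

/-- `μ` is a representing measure (on `[0,∞)`, modelled as a measure on `ℝ` vanishing on
`(-∞,0)`) of the Stieltjes moment sequence `a`. -/
def IsRepMeas (a : ℕ → ℝ) (μ : Measure ℝ) : Prop :=
  (∀ n, 0 ≤ a n) ∧ μ (Set.Iio 0) = 0 ∧
    ∀ n : ℕ, ∫⁻ x, ENNReal.ofReal (x ^ n) ∂μ = ENNReal.ofReal (a n)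

/-- `a` is a Stieltjes moment sequence. -/
def IsStieltjes (a : ℕ → ℝ) : Prop :=
  ∃ μ : Measure ℝ, IsRepMeas a μ

/-- A Stieltjes moment sequence is determinate if it has a unique representing measure. -/
def IsDeterminate (a : ℕ → ℝ) : Prop :=
  ∀ μ ν : Measure ℝ, IsRepMeas a μ → IsRepMeas a ν → μ = ν

/-- msupport of a finite sum of Dirac measures. -/
lemma msupport_sum_dirac {ι : Type*} (s : Finset ι) (f : ι → ℝ) :
    msupport (∑ i ∈ s, Measure.dirac (f i)) = ↑(s.image f) := by
  ext x
  constructor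
  · intro hx
    by_contra hxn
    have hU : IsOpen (↑(s.image f) : Set ℝ)ᶜ := (Set.Finite.isClosed (s.image f).finite_toSet).isOpen_compl
    have := hx _ hU hxn
    have hzero : (∑ i ∈ s, Measure.dirac (f i)) (↑(s.image f) : Set ℝ)ᶜ = 0 := by
      rw [Measure.finset_sum_apply]
      refine Finset.sum_eq_zero fun i hi => ?_
      rw [Measure.dirac_apply' _ (Set.Finite.isClosed (s.image f).finite_toSet).isOpen_compl.measurableSet]
      rw [Set.indicator_of_notMem]
      simp only [Set.mem_compl_iff, not_not, Finset.coe_image]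
      exact Set.mem_image_of_mem f (by exact hi)
    rw [hzero] at this
    exact lt_irrefl 0 this
  · intro hx U hUo hxU
    simp only [Finset.coe_image, Set.mem_image, Finset.mem_coe] at hx
    obtain ⟨i, hi, rfl⟩ := hx
    have h1 : Measure.dirac (f i) U = 1 := Measure.dirac_apply_of_mem hxU
    have : (1:ENNReal) ≤ (∑ j ∈ s, Measure.dirac (f j)) U := by
      rw [Measure.finset_sum_apply]
      calc (1:ENNReal) = Measure.dirac (f i) U := h1.symm
        _ ≤ ∑ j ∈ s, Measure.dirac (f j) U := Finset.single_le_sum (f := fun j => Measure.dirac (f j) U) (fun _ _ => zero_le) hi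
    exact lt_of_lt_of_le one_pos this

/-- the complement of msupport is null (second countable space). -/
lemma measure_msupport_compl (μ : Measure ℝ) : μ (msupport μ)ᶜ = 0 := by
  have hset : (msupport μ)ᶜ = ⋃₀ {U : Set ℝ | IsOpen U ∧ μ U = 0} := by
    ext x
    simp only [Set.mem_compl_iff, msupport, Set.mem_setOf_eq, Set.mem_sUnion]
    constructor
    · intro hx
      push_neg at hx
      obtain ⟨U, hUo, hxU, hU0⟩ := hx
      exact ⟨U, ⟨hUo, le_antisymm hU0 zero_le⟩, hxU⟩
    · rintro ⟨U, ⟨hUo, hU0⟩, hxU⟩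
      push_neg
      exact ⟨U, hUo, hxU, by rw [hU0]⟩
  obtain ⟨T, hTc, hTsub, hTeq⟩ := TopologicalSpace.isOpen_sUnion_countable
    {U : Set ℝ | IsOpen U ∧ μ U = 0} (fun U hU => hU.1)
  rw [hset, ← hTeq, Set.sUnion_eq_iUnion]
  haveI := hTc.to_subtype
  exact measure_iUnion_null fun U => (hTsub U.2).2


/-- moments of a finite sum of diracs -/
lemma lintegral_sum_dirac {ι : Type*} (s : Finset ι) (f : ι → ℝ) (g : ℝ → ℝ)
    (hg : Measurable g) :
    ∫⁻ x, ENNReal.ofReal (g x) ∂(∑ i ∈ s, Measure.dirac (f i)) =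
      ∑ i ∈ s, ENNReal.ofReal (g (f i)) := by
  rw [lintegral_finset_sum_measure]
  exact Finset.sum_congr rfl fun i _ => lintegral_dirac' _ (hg.ennreal_ofReal)

/-- A finite measure is concentrated on its support; if the support is a finite set,
the lintegral is a finite sum over atoms. -/
lemma lintegral_eq_sum_msupport (μ : Measure ℝ) (S : Finset ℝ) (hS : msupport μ = ↑S)
    (g : ℝ → ℝ) (hg : Measurable g) :
    ∫⁻ x, ENNReal.ofReal (g x) ∂μ = ∑ x ∈ S, ENNReal.ofReal (g x) * μ {x} := by
  have hnull : μ (↑S : Set ℝ)ᶜ = 0 := by rw [← hS]; exact measure_msupport_compl μ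
  have hmeas : MeasurableSet (↑S : Set ℝ) := S.measurableSet
  have : ∫⁻ x, ENNReal.ofReal (g x) ∂μ = ∫⁻ x in (↑S : Set ℝ), ENNReal.ofReal (g x) ∂μ := by
    rw [← MeasureTheory.lintegral_add_compl (fun x => ENNReal.ofReal (g x)) hmeas,
      MeasureTheory.setLIntegral_measure_zero _ _ hnull, add_zero]
  rw [this, lintegral_finset]

/-- atoms of a measure with finite msupport have positive mass -/
lemma atom_pos (μ : Measure ℝ) (S : Finset ℝ) (hS : msupport μ = ↑S) {x : ℝ}
    (hx : x ∈ S) : 0 < μ {x} := by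
  have hxs : x ∈ msupport μ := by rw [hS]; exact hx
  have hU : IsOpen ((↑(S.erase x) : Set ℝ)ᶜ) :=
    (Set.Finite.isClosed (S.erase x).finite_toSet).isOpen_compl
  have hxU : x ∈ (↑(S.erase x) : Set ℝ)ᶜ := by
    simp
  have hpos := hxs _ hU hxU
  have hsub : (↑(S.erase x) : Set ℝ)ᶜ ⊆ {x} ∪ (↑S : Set ℝ)ᶜ := by
    intro y hy
    simp only [Set.mem_compl_iff, Finset.coe_erase, Set.mem_diff, not_and, not_not] at hy
    by_cases hyS : y ∈ (↑S : Set ℝ)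
    · left; exact hy hyS
    · right; exact hyS
  have hmono := measure_mono (μ := μ) hsub
  have hle : μ ((↑(S.erase x) : Set ℝ)ᶜ) ≤ μ {x} + μ ((↑S : Set ℝ)ᶜ) :=
    le_trans hmono (measure_union_le _ _)
  rw [show μ (↑S : Set ℝ)ᶜ = 0 by rw [← hS]; exact measure_msupport_compl μ, add_zero] at hle
  exact lt_of_lt_of_le hpos hle


/-- limit of the normalized power sum -/
lemma tendsto_power_sum (A : Finset ℝ) (α : ℝ → ℝ) (m : ℝ) (hm : 0 < m)
    (hA : ∀ x ∈ A, 0 < x) (hle : ∀ x ∈ A, x ≤ m) :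
    Tendsto (fun n : ℕ => (∑ x ∈ A, α x * x ^ n) / m ^ n) atTop
      (nhds (if m ∈ A then α m else 0)) := by
  have key : ∀ n : ℕ, (∑ x ∈ A, α x * x ^ n) / m ^ n = ∑ x ∈ A, α x * (x / m) ^ n := by
    intro n
    rw [Finset.sum_div]
    refine Finset.sum_congr rfl fun x hx => ?_
    rw [div_pow, mul_div_assoc]
  simp only [key]
  have hterm : ∀ x ∈ A, Tendsto (fun n : ℕ => α x * (x / m) ^ n) atTop
      (nhds (if x = m then α x else 0)) := by
    intro x hx
    by_cases hxm : x = m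
    · subst hxm
      simp only [if_pos rfl, div_self hm.ne', one_pow, mul_one]
      exact tendsto_const_nhds
    · rw [if_neg hxm]
      have h1 : (0:ℝ) ≤ x / m := le_of_lt (div_pos (hA x hx) hm)
      have h2 : x / m < 1 := (div_lt_one hm).mpr (lt_of_le_of_ne (hle x hx) hxm)
      have := (tendsto_pow_atTop_nhds_zero_of_lt_one h1 h2).const_mul (α x)
      simpa using this
  have := tendsto_finset_sum A hterm
  convert this using 2
  rw [Finset.sum_ite_eq' A m α]

lemma exp_indep_aux : ∀ k : ℕ, ∀ A B : Finset ℝ, (A ∪ B).card ≤ k →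
    (∀ x ∈ A, 0 < x) → (∀ y ∈ B, 0 < y) →
    ∀ α β : ℝ → ℝ, (∀ x ∈ A, 0 < α x) → (∀ y ∈ B, 0 < β y) →
    (∀ n : ℕ, ∑ x ∈ A, α x * x ^ n = ∑ y ∈ B, β y * y ^ n) → A = B := by
  intro k
  induction k with
  | zero =>
    intro A B hcard _ _ _ _ _ _ _
    have : A ∪ B = ∅ := Finset.card_eq_zero.mp (Nat.le_zero.mp hcard)
    rw [Finset.union_eq_empty.mp this |>.1, Finset.union_eq_empty.mp this |>.2]
  | succ k ih =>
    intro A B hcard hApos hBpos α β hα hβ hmom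
    by_cases hne : A ∪ B = ∅
    · rw [Finset.union_eq_empty.mp hne |>.1, Finset.union_eq_empty.mp hne |>.2]
    · have hne' : (A ∪ B).Nonempty := Finset.nonempty_of_ne_empty hne
      set m := (A ∪ B).max' hne' with hm_def
      have hmem : m ∈ A ∪ B := (A ∪ B).max'_mem hne'
      have hmpos : 0 < m := by
        rcases Finset.mem_union.mp hmem with h | h
        · exact hApos m h
        · exact hBpos m h
      have hmaxA : ∀ x ∈ A, x ≤ m := fun x hx =>
        Finset.le_max' _ _ (Finset.mem_union_left _ hx)
      have hmaxB : ∀ y ∈ B, y ≤ m := fun y hy =>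
        Finset.le_max' _ _ (Finset.mem_union_right _ hy)
      -- limits
      have hTA := tendsto_power_sum A α m hmpos hApos hmaxA
      have hTB := tendsto_power_sum B β m hmpos hBpos hmaxB
      have heqfun : (fun n : ℕ => (∑ x ∈ A, α x * x ^ n) / m ^ n) =
          (fun n : ℕ => (∑ y ∈ B, β y * y ^ n) / m ^ n) := by
        funext n; rw [hmom n]
      rw [heqfun] at hTA
      have hlim : (if m ∈ A then α m else 0) = (if m ∈ B then β m else 0) :=
        tendsto_nhds_unique hTA hTB
      -- m in both
      have hmA : m ∈ A := by
        by_contra h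
        rw [if_neg h] at hlim
        rcases Finset.mem_union.mp hmem with h' | h'
        · exact h h'
        · rw [if_pos h'] at hlim
          exact absurd hlim.symm (ne_of_gt (hβ m h'))
      have hmB : m ∈ B := by
        by_contra h
        rw [if_neg h, if_pos hmA] at hlim
        exact absurd hlim (ne_of_gt (hα m hmA))
      have hcoef : α m = β m := by rw [if_pos hmA, if_pos hmB] at hlim; exact hlim
      -- recurse on erased sets
      have herase : A.erase m = B.erase m := by
        apply ih (A.erase m) (B.erase m)
        · have : A.erase m ∪ B.erase m = (A ∪ B).erase m := (Finset.erase_union_distrib A B m).symm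
          rw [this, Finset.card_erase_of_mem hmem]
          omega
        · exact fun x hx => hApos x (Finset.mem_of_mem_erase hx)
        · exact fun y hy => hBpos y (Finset.mem_of_mem_erase hy)
        · exact fun x hx => hα x (Finset.mem_of_mem_erase hx)
        · exact fun y hy => hβ y (Finset.mem_of_mem_erase hy)
        · intro n
          have h2 : ∑ x ∈ A.erase m, α x * x ^ n + α m * m ^ n =
              ∑ y ∈ B.erase m, β y * y ^ n + β m * m ^ n := by
            rw [Finset.sum_erase_add A _ hmA, Finset.sum_erase_add B _ hmB]
            exact hmom n
          rw [hcoef] at h2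
          linarith
      calc A = insert m (A.erase m) := (Finset.insert_erase hmA).symm
        _ = insert m (B.erase m) := by rw [herase]
        _ = B := Finset.insert_erase hmB

lemma exp_indep (A B : Finset ℝ) (hApos : ∀ x ∈ A, 0 < x) (hBpos : ∀ y ∈ B, 0 < y)
    (α β : ℝ → ℝ) (hα : ∀ x ∈ A, 0 < α x) (hβ : ∀ y ∈ B, 0 < β y)
    (hmom : ∀ n : ℕ, ∑ x ∈ A, α x * x ^ n = ∑ y ∈ B, β y * y ^ n) : A = B :=
  exp_indep_aux (A ∪ B).card A B le_rfl hApos hBpos α β hα hβ hmom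


noncomputable def prodSet (T : Finset ℝ) : Finset ℝ :=
  (T ×ˢ T).image (fun p => p.1 * p.2)

lemma mem_prodSet {T : Finset ℝ} {z : ℝ} :
    z ∈ prodSet T ↔ ∃ a ∈ T, ∃ b ∈ T, a * b = z := by
  simp [prodSet, Finset.mem_image, Finset.mem_product]
  constructor
  · rintro ⟨a, b, ⟨ha, hb⟩, h⟩; exact ⟨a, ha, b, hb, h⟩
  · rintro ⟨a, ha, b, hb, h⟩; exact ⟨a, b, ⟨ha, hb⟩, h⟩

lemma prodSet_card_upper (T : Finset ℝ) :
    (prodSet T).card ≤ T.card * (T.card + 1) / 2 := by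
  classical
  have himg : prodSet T = T.sym2.image (Sym2.lift ⟨fun a b => a * b, mul_comm⟩) := by
    ext z
    rw [mem_prodSet]
    simp only [Finset.mem_image]
    constructor
    · rintro ⟨a, ha, b, hb, h⟩
      exact ⟨s(a, b), Finset.mem_sym2_iff.mpr (by intro c hc; rcases Sym2.mem_iff.mp hc with rfl | rfl; exacts [ha, hb]), h⟩
    · rintro ⟨s, hs, h⟩
      induction s using Sym2.ind with
      | _ a b =>
        rw [Finset.mem_sym2_iff] at hs
        exact ⟨a, hs a (Sym2.mem_mk_left a b), b, hs b (Sym2.mem_mk_right a b), h⟩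
  rw [himg]
  calc (T.sym2.image _).card ≤ T.sym2.card := Finset.card_image_le
    _ = (T.card + 1).choose 2 := Finset.card_sym2 T
    _ = (T.card + 1) * T.card / 2 := Nat.choose_two_right _
    _ = T.card * (T.card + 1) / 2 := by rw [Nat.mul_comm]

lemma prodSet_card_lower (T : Finset ℝ) (hT : ∀ x ∈ T, 0 < x) {N : ℕ} (hN : 1 ≤ N)
    (hcard : T.card = N) : 2 * N - 1 ≤ (prodSet T).card := by
  classical
  have e := T.orderIsoOfFin hcard
  -- g : Fin N → ℝ, increasing, in T
  set t : ℕ → ℝ := fun i => if h : i < N then (e ⟨i, h⟩ : ℝ) else 0 with ht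
  have htmem : ∀ i (h : i < N), t i ∈ T := by
    intro i h; rw [ht]; simp only [dif_pos h]; exact (e ⟨i, h⟩).2
  have htpos : ∀ i (h : i < N), 0 < t i := fun i h => hT _ (htmem i h)
  have htmono : ∀ i j (hi : i < N) (hj : j < N), i < j → t i < t j := by
    intro i j hi hj hij
    rw [ht]; simp only [dif_pos hi, dif_pos hj]
    exact_mod_cast e.strictMono (by exact hij : (⟨i, hi⟩ : Fin N) < ⟨j, hj⟩)
  -- f : first N values t 0 * t i ; then t (i-N+1) * t (N-1)
  set f : ℕ → ℝ := fun i => if i < N then t 0 * t i else t (i - N + 1) * t (N - 1) with hf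
  have hfmem : ∀ i < 2 * N - 1, f i ∈ prodSet T := by
    intro i hi
    rw [hf]
    by_cases h : i < N
    · simp only [if_pos h]
      exact mem_prodSet.mpr ⟨t 0, htmem 0 hN, t i, htmem i h, rfl⟩
    · simp only [if_neg h]
      exact mem_prodSet.mpr ⟨t (i - N + 1), htmem _ (by omega), t (N - 1), htmem _ (by omega), rfl⟩
  have hfmono : ∀ i j, j < 2 * N - 1 → i < j → f i < f j := by
    intro i j hj hij
    rw [hf]
    by_cases h1 : i < N <;> by_cases h2 : j < N
    · simp only [if_pos h1, if_pos h2]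
      exact mul_lt_mul_of_pos_left (htmono i j h1 h2 hij) (htpos 0 hN)
    · simp only [if_pos h1, if_neg h2]
      have hjN : j - N + 1 < N := by omega
      have h0 : 0 < j - N + 1 := by omega
      calc t 0 * t i ≤ t 0 * t (N - 1) := by
            apply mul_le_mul_of_nonneg_left _ (le_of_lt (htpos 0 hN))
            rcases Nat.lt_or_ge i (N-1) with h | h
            · exact le_of_lt (htmono i (N-1) h1 (by omega) h)
            · have : i = N - 1 := by omega
              rw [this]
        _ < t (j - N + 1) * t (N - 1) := by
            apply mul_lt_mul_of_pos_right _ (htpos (N-1) (by omega))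
            exact htmono 0 (j - N + 1) hN hjN h0
    · omega
    · simp only [if_neg h1, if_neg h2]
      apply mul_lt_mul_of_pos_right _ (htpos (N-1) (by omega))
      exact htmono (i - N + 1) (j - N + 1) (by omega) (by omega) (by omega)
  have hinj : Set.InjOn f ↑(Finset.range (2 * N - 1)) := by
    intro i hi j hj hij
    simp only [Finset.coe_range, Set.mem_Iio] at hi hj
    by_contra hne
    rcases Nat.lt_or_ge i j with h | h
    · exact absurd hij (ne_of_lt (hfmono i j hj h))
    · have : j < i := by omega
      exact absurd hij.symm (ne_of_lt (hfmono j i hi this))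
  calc 2 * N - 1 = (Finset.range (2 * N - 1)).card := (Finset.card_range _).symm
    _ = ((Finset.range (2 * N - 1)).image f).card := (Finset.card_image_of_injOn hinj).symm
    _ ≤ (prodSet T).card := Finset.card_le_card (by
        intro z hz
        rw [Finset.mem_image] at hz
        obtain ⟨i, hi, rfl⟩ := hz
        exact hfmem i (Finset.mem_range.mp hi))


def sumSet (S : Finset ℕ) : Finset ℕ := (S ×ˢ S).image (fun p => p.1 + p.2)

lemma mem_sumSet {S : Finset ℕ} {z : ℕ} :
    z ∈ sumSet S ↔ ∃ a ∈ S, ∃ b ∈ S, a + b = z := by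
  simp [sumSet, Finset.mem_image, Finset.mem_product]
  constructor
  · rintro ⟨a, b, ⟨ha, hb⟩, h⟩; exact ⟨a, ha, b, hb, h⟩
  · rintro ⟨a, ha, b, hb, h⟩; exact ⟨a, b, ⟨ha, hb⟩, h⟩

lemma sumSet_range (N : ℕ) (hN : 1 ≤ N) : sumSet (Finset.range N) = Finset.range (2 * N - 1) := by
  ext z
  rw [mem_sumSet]
  simp only [Finset.mem_range]
  constructor
  · rintro ⟨a, ha, b, hb, rfl⟩; omega
  · intro hz
    exact ⟨min z (N - 1), by omega, z - min z (N - 1), by omega, by omega⟩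

/-- arithmetic coverage -/
lemma coverage : ∀ N M : ℕ, 2 ≤ N → 2 * N ≤ M → 2 * M ≤ N * (N + 1) →
    ∃ k x, 1 ≤ k ∧ k + 1 ≤ N ∧ k ≤ x ∧ x ≤ 2 * k - 1 ∧
      2 * M = 2 * (x + k + 1) + 2 * (N - 1 - k) * (k + 1) + (N - 1 - k) * (N - k) := by
  intro N
  induction N with
  | zero => omega
  | succ n ih =>
    intro M hN h1 h2
    by_cases hcase : M ≤ 3 * n
    · refine ⟨n, M - n - 1, by omega, by omega, by omega, by omega, ?_⟩
      have hnn : n + 1 - 1 - n = 0 := by omega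
      rw [hnn]
      omega
    · have hexp : (n + 1) * (n + 1 + 1) = n * n + 3 * n + 2 := by ring
      have hexp2 : n * (n + 1) = n * n + n := by ring
      have hn2 : 2 ≤ n := by nlinarith
      obtain ⟨k, x, hk1, hkn, hkx, hx, heq⟩ := ih (M - (n + 1)) (by omega) (by omega) (by omega)
      refine ⟨k, x, hk1, by omega, hkx, hx, ?_⟩
      have e1 : n + 1 - 1 - k = (n - 1 - k) + 1 := by omega
      have e2 : n + 1 - k = (n - k) + 1 := by omega
      rw [e1, e2]
      have expand : 2 * (x + k + 1) + 2 * ((n - 1 - k) + 1) * (k + 1) + ((n - 1 - k) + 1) * ((n - k) + 1)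
          = (2 * (x + k + 1) + 2 * (n - 1 - k) * (k + 1) + (n - 1 - k) * (n - k)) + (2 * (k + 1) + (n - 1 - k) + (n - k) + 1) := by ring
      rw [expand, ← heq]
      omega

section Family
variable (k x m : ℕ)

def bb (k : ℕ) : ℕ → ℕ := fun i => 4 ^ (k + 1 + i)

def Msmall (k x : ℕ) : Finset ℕ := insert x (Finset.range k)

def Mi (k x i : ℕ) : Finset ℕ := Msmall k x ∪ (Finset.Icc 1 i).image (bb k)

def famS (k x m : ℕ) : Finset ℕ := Mi k x m

lemma lt_pow4 (a : ℕ) : a < 4 ^ a := Nat.lt_pow_self (by norm_num)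

lemma bb_mono {k : ℕ} : ∀ {i j}, i ≤ j → bb k i ≤ bb k j := by
  intro i j h
  exact Nat.pow_le_pow_right (by norm_num) (by omega)

lemma bb_inj {k : ℕ} : Function.Injective (bb k) := by
  intro i j h
  have h2 := Nat.pow_right_injective (by norm_num : 2 ≤ 4) h
  omega

lemma mem_Msmall {k x s : ℕ} : s ∈ Msmall k x ↔ s = x ∨ s < k := by
  simp [Msmall]

lemma Msmall_le {k x : ℕ} (hk : 1 ≤ k) (hx2 : x ≤ 2 * k - 1) :
    ∀ s ∈ Msmall k x, s ≤ 2 * k - 1 := by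
  intro s hs
  rcases mem_Msmall.mp hs with rfl | h <;> omega

lemma small_lt_bb {k : ℕ} (hk : 1 ≤ k) (s : ℕ) (hs : s ≤ 2 * k - 1) (i : ℕ) :
    s < bb k i := by
  have h1 : k < 4 ^ k := lt_pow4 k
  have h2 : 4 ^ (k + 1) ≤ bb k i := by
    rw [bb]
    exact Nat.pow_le_pow_right (by norm_num) (by omega)
  have h3 : 4 ^ (k + 1) = 4 * 4 ^ k := by ring
  omega

lemma card_Mi {k x : ℕ} (hk : 1 ≤ k) (hx1 : k ≤ x) (hx2 : x ≤ 2 * k - 1) (i : ℕ) :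
    (Mi k x i).card = k + 1 + i := by
  have hMs : (Msmall k x).card = k + 1 := by
    rw [Msmall, Finset.card_insert_of_notMem (by simp; omega), Finset.card_range]
  rw [Mi, Finset.card_union_of_disjoint, hMs, Finset.card_image_of_injective _ bb_inj,
    Nat.card_Icc]
  · omega
  · rw [Finset.disjoint_left]
    intro s hs hmem
    rw [Finset.mem_image] at hmem
    obtain ⟨j, _, rfl⟩ := hmem
    exact absurd (Msmall_le hk hx2 _ hs) (not_le.mpr (small_lt_bb hk _ le_rfl j))

lemma Mi_le {k x : ℕ} (hk : 1 ≤ k) (hx2 : x ≤ 2 * k - 1) {i s : ℕ} (hs : s ∈ Mi k x i) :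
    s ≤ bb k i := by
  rw [Mi, Finset.mem_union] at hs
  rcases hs with hs | hs
  · exact le_of_lt (small_lt_bb hk _ (Msmall_le hk hx2 _ hs) i)
  · rw [Finset.mem_image] at hs
    obtain ⟨j, hj, rfl⟩ := hs
    exact bb_mono (Finset.mem_Icc.mp hj).2

def blk (k x i : ℕ) : Finset ℕ := (Mi k x i).image (fun s => bb k i + s)

lemma blk_bounds {k x : ℕ} (hk : 1 ≤ k) (hx2 : x ≤ 2 * k - 1) {i z : ℕ}
    (hz : z ∈ blk k x i) : bb k i ≤ z ∧ z ≤ 2 * bb k i := by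
  rw [blk, Finset.mem_image] at hz
  obtain ⟨s, hs, rfl⟩ := hz
  have := Mi_le hk hx2 hs
  omega

lemma bb_twice_lt {k : ℕ} {i j : ℕ} (hij : i < j) : 2 * bb k i < bb k j := by
  have h1 : bb k (i+1) ≤ bb k j := bb_mono hij
  have h2 : bb k (i+1) = 4 * bb k i := by rw [bb, bb]; ring
  have h3 : 0 < bb k i := by rw [bb]; exact Nat.pow_pos (by norm_num)
  omega

def famT (k x m : ℕ) : Finset ℕ :=
  (Finset.range (x + k) ∪ {2 * x}) ∪ (Finset.Icc 1 m).biUnion (blk k x)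

lemma mem_famS {k x m s : ℕ} :
    s ∈ famS k x m ↔ (s ∈ Msmall k x ∨ ∃ i, 1 ≤ i ∧ i ≤ m ∧ s = bb k i) := by
  rw [famS, Mi, Finset.mem_union, Finset.mem_image]
  constructor
  · rintro (h | ⟨i, hi, rfl⟩)
    · exact Or.inl h
    · exact Or.inr ⟨i, (Finset.mem_Icc.mp hi).1, (Finset.mem_Icc.mp hi).2, rfl⟩
  · rintro (h | ⟨i, h1, h2, rfl⟩)
    · exact Or.inl h
    · exact Or.inr ⟨i, Finset.mem_Icc.mpr ⟨h1, h2⟩, rfl⟩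

lemma sumSet_famS {k x m : ℕ} (hk : 1 ≤ k) (hx1 : k ≤ x) (hx2 : x ≤ 2 * k - 1) :
    sumSet (famS k x m) = famT k x m := by
  ext z
  rw [mem_sumSet, famT]
  simp only [Finset.mem_union, Finset.mem_biUnion, Finset.mem_range, Finset.mem_singleton,
    Finset.mem_Icc]
  constructor
  · rintro ⟨a, ha, c, hc, rfl⟩
    rcases mem_famS.mp ha with hA | ⟨i, hi1, hi2, rfl⟩
    · rcases mem_famS.mp hc with hC | ⟨j, hj1, hj2, rfl⟩
      · -- both small
        rcases mem_Msmall.mp hA with rfl | h1 <;> rcases mem_Msmall.mp hC with rfl | h2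
        · exact Or.inl (Or.inr (by omega))
        · exact Or.inl (Or.inl (by omega))
        · exact Or.inl (Or.inl (by omega))
        · exact Or.inl (Or.inl (by omega))
      · -- a small, c = bb j
        refine Or.inr ⟨j, ⟨hj1, hj2⟩, ?_⟩
        rw [blk, Finset.mem_image]
        exact ⟨a, by rw [Mi, Finset.mem_union]; exact Or.inl hA, by omega⟩
    · rcases mem_famS.mp hc with hC | ⟨j, hj1, hj2, rfl⟩
      · refine Or.inr ⟨i, ⟨hi1, hi2⟩, ?_⟩
        rw [blk, Finset.mem_image]
        exact ⟨c, by rw [Mi, Finset.mem_union]; exact Or.inl hC, rfl⟩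
      · -- both bb
        rcases Nat.le_total i j with hij | hij
        · refine Or.inr ⟨j, ⟨hj1, hj2⟩, ?_⟩
          rw [blk, Finset.mem_image]
          refine ⟨bb k i, ?_, by omega⟩
          rw [Mi, Finset.mem_union, Finset.mem_image]
          exact Or.inr ⟨i, Finset.mem_Icc.mpr ⟨hi1, hij⟩, rfl⟩
        · refine Or.inr ⟨i, ⟨hi1, hi2⟩, ?_⟩
          rw [blk, Finset.mem_image]
          refine ⟨bb k j, ?_, rfl⟩
          rw [Mi, Finset.mem_union, Finset.mem_image]
          exact Or.inr ⟨j, Finset.mem_Icc.mpr ⟨hj1, hij⟩, rfl⟩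
  · rintro ((hz | rfl) | ⟨i, ⟨hi1, hi2⟩, hz⟩)
    · -- z < x + k
      by_cases hcase : z ≤ 2 * k - 2
      · refine ⟨min z (k-1), ?_, z - min z (k-1), ?_, by omega⟩
        · exact mem_famS.mpr (Or.inl (mem_Msmall.mpr (Or.inr (by omega))))
        · exact mem_famS.mpr (Or.inl (mem_Msmall.mpr (Or.inr (by omega))))
      · refine ⟨x, mem_famS.mpr (Or.inl (mem_Msmall.mpr (Or.inl rfl))), z - x,
          mem_famS.mpr (Or.inl (mem_Msmall.mpr (Or.inr (by omega)))), by omega⟩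
    · exact ⟨x, mem_famS.mpr (Or.inl (mem_Msmall.mpr (Or.inl rfl))), x,
        mem_famS.mpr (Or.inl (mem_Msmall.mpr (Or.inl rfl))), by omega⟩
    · rw [blk, Finset.mem_image] at hz
      obtain ⟨s, hs, rfl⟩ := hz
      refine ⟨bb k i, mem_famS.mpr (Or.inr ⟨i, hi1, hi2, rfl⟩), s, ?_, rfl⟩
      rw [Mi, Finset.mem_union] at hs
      rcases hs with hs | hs
      · exact mem_famS.mpr (Or.inl hs)
      · rw [Finset.mem_image] at hs
        obtain ⟨j, hj, rfl⟩ := hs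
        rw [Finset.mem_Icc] at hj
        exact mem_famS.mpr (Or.inr ⟨j, hj.1, by omega, rfl⟩)

lemma card_famT {k x m : ℕ} (hk : 1 ≤ k) (hx1 : k ≤ x) (hx2 : x ≤ 2 * k - 1) :
    2 * (famT k x m).card = 2 * (x + k + 1) + 2 * m * (k + 1) + m * (m + 1) := by
  have hlow : ((Finset.range (x + k) ∪ {2 * x}).card) = x + k + 1 := by
    rw [Finset.card_union_of_disjoint, Finset.card_range, Finset.card_singleton]
    rw [Finset.disjoint_left]
    intro a ha hb
    rw [Finset.mem_range] at ha
    rw [Finset.mem_singleton] at hb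
    omega
  have hblkcard : ∀ i, 1 ≤ i → i ≤ m → (blk k x i).card = k + 1 + i := by
    intro i _ _
    rw [blk, Finset.card_image_of_injective _ (add_right_injective _), card_Mi hk hx1 hx2]
  have hdisj : ∀ i ∈ Finset.Icc 1 m, ∀ j ∈ Finset.Icc 1 m, i ≠ j →
      Disjoint (blk k x i) (blk k x j) := by
    intro i _ j _ hij
    rw [Finset.disjoint_left]
    intro a hai haj
    have h1 := blk_bounds hk hx2 hai
    have h2 := blk_bounds hk hx2 haj
    rcases Nat.lt_or_ge i j with h | h
    · have := bb_twice_lt (k := k) h; omega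
    · have hji : j < i := by omega
      have := bb_twice_lt (k := k) hji; omega
  have hbiu : ((Finset.Icc 1 m).biUnion (blk k x)).card = ∑ i ∈ Finset.Icc 1 m, (k + 1 + i) := by
    rw [Finset.card_biUnion hdisj]
    exact Finset.sum_congr rfl fun i hi =>
      hblkcard i (Finset.mem_Icc.mp hi).1 (Finset.mem_Icc.mp hi).2
  have hdisj2 : Disjoint (Finset.range (x + k) ∪ {2 * x}) ((Finset.Icc 1 m).biUnion (blk k x)) := by
    rw [Finset.disjoint_left]
    intro a ha hb
    rw [Finset.mem_biUnion] at hb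
    obtain ⟨i, hi, hbi⟩ := hb
    have h1 := (blk_bounds hk hx2 hbi).1
    have h2 : 2 * x ≤ 2 * k - 1 + (2 * k - 1) := by omega
    have h3 := small_lt_bb hk (2 * k - 1) le_rfl i
    have h4 : 4 ^ (k+1) ≤ bb k i := Nat.pow_le_pow_right (by norm_num) (by omega)
    have h5 : k < 4 ^ k := lt_pow4 k
    have h6 : (4:ℕ) ^ (k + 1) = 4 * 4 ^ k := by ring
    simp only [Finset.mem_union, Finset.mem_range, Finset.mem_singleton] at ha
    omega
  rw [famT, Finset.card_union_of_disjoint hdisj2, hbiu]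
  rw [hlow]
  have hsum : ∑ i ∈ Finset.Icc 1 m, (k + 1 + i) = m * (k + 1) + ∑ i ∈ Finset.Icc 1 m, i := by
    rw [Finset.sum_add_distrib, Finset.sum_const, Nat.card_Icc]
    simp [mul_comm]
  have hgauss : 2 * (∑ i ∈ Finset.Icc 1 m, i) = m * (m + 1) := by
    have h1 : Finset.range (m + 1) = insert 0 (Finset.Icc 1 m) := by
      ext a; simp [Finset.mem_Icc]; omega
    have h2 := Finset.sum_range_id_mul_two (m + 1)
    rw [h1, Finset.sum_insert (by simp)] at h2
    simp only [Nat.add_sub_cancel] at h2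
    rw [Nat.mul_comm (m + 1) m] at h2
    omega
  have hmm : 2 * m * (k + 1) = 2 * (m * (k + 1)) := by ring
  omega

lemma card_famS {k x m : ℕ} (hk : 1 ≤ k) (hx1 : k ≤ x) (hx2 : x ≤ 2 * k - 1) :
    (famS k x m).card = k + 1 + m := card_Mi hk hx1 hx2 m

end Family

lemma sumset_exact (N M : ℕ) (hN : 1 ≤ N) (h1 : 2 * N - 1 ≤ M) (h2 : M ≤ N * (N + 1) / 2) :
    ∃ S : Finset ℕ, S.card = N ∧ (sumSet S).card = M := by
  have hdvd : 2 ∣ N * (N + 1) := (Nat.even_mul_succ_self N).two_dvd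
  have h2' : 2 * M ≤ N * (N + 1) := by
    obtain ⟨c, hc⟩ := hdvd
    rw [hc] at h2 ⊢
    omega
  rcases Nat.lt_or_ge M (2 * N) with hcase | hcase
  · refine ⟨Finset.range N, Finset.card_range N, ?_⟩
    rw [sumSet_range N hN, Finset.card_range]
    omega
  · have hN2 : 2 ≤ N := by nlinarith
    obtain ⟨k, x, hk1, hkN, hkx, hx, heq⟩ := coverage N M hN2 hcase h2'
    refine ⟨famS k x (N - 1 - k), ?_, ?_⟩
    · rw [card_famS hk1 hkx hx]; omega
    · have hc := card_famT (m := N - 1 - k) hk1 hkx hx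
      rw [sumSet_famS hk1 hkx hx]
      have hm1 : N - 1 - k + 1 = N - k := by omega
      rw [hm1] at hc
      omega

lemma pow2_inj : Function.Injective (fun s : ℕ => (2:ℝ) ^ s) := by
  intro a b h
  have h' : (2:ℝ) ^ a = (2:ℝ) ^ b := h
  have h3 : (2:ℕ) ^ a = 2 ^ b := by exact_mod_cast h'
  exact Nat.pow_right_injective le_rfl h3

lemma prod_exact (N M : ℕ) (hN : 1 ≤ N) (h1 : 2 * N - 1 ≤ M) (h2 : M ≤ N * (N + 1) / 2) :
    ∃ T : Finset ℝ, (∀ t ∈ T, 0 < t) ∧ T.card = N ∧ (prodSet T).card = M := by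
  obtain ⟨S, hScard, hSsum⟩ := sumset_exact N M hN h1 h2
  refine ⟨S.image (fun s => (2:ℝ) ^ s), ?_, ?_, ?_⟩
  · intro t ht
    rw [Finset.mem_image] at ht
    obtain ⟨s, _, rfl⟩ := ht
    positivity
  · rw [Finset.card_image_of_injective _ pow2_inj, hScard]
  · have himg : prodSet (S.image (fun s => (2:ℝ) ^ s)) = (sumSet S).image (fun s => (2:ℝ) ^ s) := by
      ext z
      rw [mem_prodSet]
      simp only [Finset.mem_image, mem_sumSet]
      constructor
      · rintro ⟨a, ⟨sa, hsa, rfl⟩, b, ⟨sb, hsb, rfl⟩, rfl⟩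
        exact ⟨sa + sb, ⟨sa, hsa, sb, hsb, rfl⟩, pow_add 2 sa sb⟩
      · rintro ⟨c, ⟨sa, hsa, sb, hsb, rfl⟩, rfl⟩
        exact ⟨(2:ℝ) ^ sa, ⟨sa, hsa, rfl⟩, (2:ℝ) ^ sb, ⟨sb, hsb, rfl⟩,
          (pow_add 2 sa sb).symm⟩
    rw [himg, Finset.card_image_of_injective _ pow2_inj, hSsum]

/-- forward construction -/
lemma forward (M N : ℕ) (hM : 1 ≤ M) (hN : 1 ≤ N) (h1 : 2 * N - 1 ≤ M)
    (h2 : M ≤ N * (N + 1) / 2) :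
    ∃ (a : ℕ → ℝ) (μ ν : Measure ℝ),
      IsRepMeas a μ ∧ msupport μ ⊆ Set.Ioi 0 ∧ (msupport μ).ncard = M ∧
      IsRepMeas (fun n => Real.sqrt (a n)) ν ∧ msupport ν ⊆ Set.Ioi 0 ∧
      (msupport ν).ncard = N := by
  obtain ⟨T, hTpos, hTcard, hTprod⟩ := prod_exact N M hN h1 h2
  set a : ℕ → ℝ := fun n => (∑ t ∈ T, t ^ n) ^ 2 with ha
  set ν : Measure ℝ := ∑ t ∈ T, Measure.dirac t with hν
  set μ : Measure ℝ := ∑ p ∈ T ×ˢ T, Measure.dirac (p.1 * p.2) with hμ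
  have hpowpos : ∀ n : ℕ, ∀ t ∈ T, (0:ℝ) ≤ t ^ n := fun n t ht => le_of_lt (pow_pos (hTpos t ht) n)
  have hsumpos : ∀ n : ℕ, (0:ℝ) ≤ ∑ t ∈ T, t ^ n := fun n => Finset.sum_nonneg (hpowpos n)
  have hsqrt : ∀ n, Real.sqrt (a n) = ∑ t ∈ T, t ^ n := by
    intro n
    rw [ha]
    exact Real.sqrt_sq (hsumpos n)
  have hmsuppν : msupport ν = ↑(T.image (fun t => t)) := msupport_sum_dirac T (fun t => t)
  have hmsuppμ : msupport μ = ↑((T ×ˢ T).image (fun p => p.1 * p.2)) :=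
    msupport_sum_dirac (T ×ˢ T) (fun p => p.1 * p.2)
  have hprodpos : ∀ p ∈ T ×ˢ T, (0:ℝ) < p.1 * p.2 := by
    intro p hp
    rw [Finset.mem_product] at hp
    exact mul_pos (hTpos _ hp.1) (hTpos _ hp.2)
  refine ⟨a, μ, ν, ⟨fun n => sq_nonneg _, ?_, ?_⟩, ?_, ?_, ⟨fun n => Real.sqrt_nonneg _, ?_, ?_⟩, ?_, ?_⟩
  · -- μ (Iio 0) = 0
    rw [hμ, Measure.finset_sum_apply]
    refine Finset.sum_eq_zero fun p hp => ?_
    rw [Measure.dirac_apply' _ measurableSet_Iio, Set.indicator_of_notMem]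
    simp only [Set.mem_Iio, not_lt]
    exact le_of_lt (hprodpos p hp)
  · -- moments of μ
    intro n
    rw [hμ, lintegral_sum_dirac (T ×ˢ T) (fun p => p.1 * p.2) (fun x : ℝ => x ^ n) (by fun_prop)]
    rw [← ENNReal.ofReal_sum_of_nonneg (fun p hp => le_of_lt (pow_pos (hprodpos p hp) n))]
    congr 1
    have hrfl : a n = (∑ t ∈ T, t ^ n) ^ 2 := rfl
    rw [hrfl, sq, Finset.sum_mul_sum, Finset.sum_product]
    exact Finset.sum_congr rfl fun s hs => Finset.sum_congr rfl fun t ht => mul_pow s t n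
  · -- msupport μ ⊆ Ioi 0
    rw [hmsuppμ]
    intro z hz
    rw [Finset.coe_image] at hz
    obtain ⟨p, hp, rfl⟩ := hz
    exact hprodpos p (by exact_mod_cast hp)
  · -- ncard = M
    rw [hmsuppμ, Set.ncard_coe_finset]
    exact hTprod
  · -- ν (Iio 0) = 0
    rw [hν, Measure.finset_sum_apply]
    refine Finset.sum_eq_zero fun t ht => ?_
    rw [Measure.dirac_apply' _ measurableSet_Iio, Set.indicator_of_notMem]
    simp only [Set.mem_Iio, not_lt]
    exact le_of_lt (hTpos t ht)
  · -- moments of ν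
    intro n
    rw [hν, lintegral_sum_dirac T (fun t => t) (fun x : ℝ => x ^ n) (by fun_prop)]
    rw [← ENNReal.ofReal_sum_of_nonneg (hpowpos n)]
    congr 1
    exact (hsqrt n).symm
  · -- msupport ν ⊆ Ioi 0
    rw [hmsuppν]
    intro z hz
    rw [Finset.coe_image] at hz
    obtain ⟨t, ht, rfl⟩ := hz
    exact hTpos t (by exact_mod_cast ht)
  · rw [hmsuppν, Finset.image_id', Set.ncard_coe_finset]
    exact hTcard

lemma mass_finite (μ : Measure ℝ) (a : ℕ → ℝ) (hrep : IsRepMeas a μ) (s : Set ℝ) : μ s ≠ ⊤ := by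
  have h0 := hrep.2.2 0
  simp only [pow_zero, ENNReal.ofReal_one, lintegral_one] at h0
  have hle : μ s ≤ μ Set.univ := measure_mono (Set.subset_univ s)
  rw [h0] at hle
  intro hc
  rw [hc] at hle
  exact ENNReal.ofReal_ne_top (top_le_iff.mp hle)

lemma real_moment (μ : Measure ℝ) (S : Finset ℝ) (hS : msupport μ = ↑S)
    (a : ℕ → ℝ) (hrep : IsRepMeas a μ) (hpos : ∀ x ∈ S, 0 < x) (n : ℕ) :
    a n = ∑ x ∈ S, (μ {x}).toReal * x ^ n := by
  have hmom := hrep.2.2 n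
  rw [lintegral_eq_sum_msupport μ S hS (fun x => x ^ n) (by fun_prop)] at hmom
  have hT := congrArg ENNReal.toReal hmom
  rw [ENNReal.toReal_ofReal (hrep.1 n),
    ENNReal.toReal_sum (fun x hx => ENNReal.mul_ne_top ENNReal.ofReal_ne_top
      (mass_finite μ a hrep {x}))] at hT
  rw [← hT]
  refine Finset.sum_congr rfl fun x hx => ?_
  rw [ENNReal.toReal_mul, ENNReal.toReal_ofReal (le_of_lt (pow_pos (hpos x hx) n)), mul_comm]

/-- reverse direction -/
lemma reverse (M N : ℕ) (hM : 1 ≤ M) (hN : 1 ≤ N)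
    (h : ∃ (a : ℕ → ℝ) (μ ν : Measure ℝ),
      IsRepMeas a μ ∧ msupport μ ⊆ Set.Ioi 0 ∧ (msupport μ).ncard = M ∧
      IsRepMeas (fun n => Real.sqrt (a n)) ν ∧ msupport ν ⊆ Set.Ioi 0 ∧
      (msupport ν).ncard = N) :
    2 * N - 1 ≤ M ∧ M ≤ N * (N + 1) / 2 := by
  classical
  obtain ⟨a, μ, ν, hrepμ, hμsub, hμcard, hrepν, hνsub, hνcard⟩ := h
  have hSfin : (msupport μ).Finite := Set.finite_of_ncard_ne_zero (by omega)
  have hTfin : (msupport ν).Finite := Set.finite_of_ncard_ne_zero (by omega)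
  set Sf := hSfin.toFinset with hSf
  set Tf := hTfin.toFinset with hTf
  have hS : msupport μ = ↑Sf := hSfin.coe_toFinset.symm
  have hT : msupport ν = ↑Tf := hTfin.coe_toFinset.symm
  have hScard : Sf.card = M := by
    rw [← hμcard, hS, Set.ncard_coe_finset]
  have hTcard : Tf.card = N := by
    rw [← hνcard, hT, Set.ncard_coe_finset]
  have hSpos : ∀ x ∈ Sf, 0 < x := by
    intro x hx
    have : x ∈ msupport μ := by rw [hS]; exact_mod_cast hx
    exact hμsub this
  have hTpos : ∀ y ∈ Tf, 0 < y := by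
    intro y hy
    have : y ∈ msupport ν := by rw [hT]; exact_mod_cast hy
    exact hνsub this
  set w : ℝ → ℝ := fun x => (μ {x}).toReal with hw
  set v : ℝ → ℝ := fun y => (ν {y}).toReal with hv
  have hwpos : ∀ x ∈ Sf, 0 < w x := by
    intro x hx
    exact ENNReal.toReal_pos (atom_pos μ Sf hS hx).ne' (mass_finite μ a hrepμ {x})
  have hvpos : ∀ y ∈ Tf, 0 < v y := by
    intro y hy
    exact ENNReal.toReal_pos (atom_pos ν Tf hT hy).ne'
      (mass_finite ν (fun n => Real.sqrt (a n)) hrepν {y})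
  have haS : ∀ n, a n = ∑ x ∈ Sf, w x * x ^ n :=
    real_moment μ Sf hS a hrepμ hSpos
  have hsT : ∀ n, Real.sqrt (a n) = ∑ y ∈ Tf, v y * y ^ n :=
    real_moment ν Tf hT _ hrepν hTpos
  -- a n as combination over the product set
  set γ : ℝ → ℝ := fun z =>
    ∑ p ∈ (Tf ×ˢ Tf).filter (fun p => p.1 * p.2 = z), v p.1 * v p.2 with hγ
  have haP : ∀ n, a n = ∑ z ∈ prodSet Tf, γ z * z ^ n := by
    intro n
    have h1 : a n = (∑ y ∈ Tf, v y * y ^ n) ^ 2 := by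
      rw [← hsT n, Real.sq_sqrt (hrepμ.1 n)]
    rw [h1, sq, Finset.sum_mul_sum]
    rw [show (∑ i ∈ Tf, ∑ j ∈ Tf, (v i * i ^ n) * (v j * j ^ n))
        = ∑ p ∈ Tf ×ˢ Tf, (v p.1 * v p.2) * (p.1 * p.2) ^ n by
      rw [Finset.sum_product]
      exact Finset.sum_congr rfl fun i _ => Finset.sum_congr rfl fun j _ => by
        rw [mul_pow]; ring]
    rw [prodSet]
    rw [Finset.sum_image' (fun p => v p.1 * v p.2 * (p.1 * p.2) ^ n) (fun p hp => ?_)]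
    rw [hγ]
    simp only
    rw [Finset.sum_mul]
    refine Finset.sum_congr rfl fun q hq => ?_
    rw [(Finset.mem_filter.mp hq).2]
  have hγpos : ∀ z ∈ prodSet Tf, 0 < γ z := by
    intro z hz
    rw [mem_prodSet] at hz
    obtain ⟨p1, hp1, p2, hp2, hpz⟩ := hz
    rw [hγ]
    have hmem : (p1, p2) ∈ (Tf ×ˢ Tf).filter (fun p => p.1 * p.2 = z) := by
      rw [Finset.mem_filter, Finset.mem_product]
      exact ⟨⟨hp1, hp2⟩, hpz⟩
    calc (0:ℝ) < v p1 * v p2 := mul_pos (hvpos _ hp1) (hvpos _ hp2)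
      _ ≤ _ := Finset.single_le_sum (f := fun p : ℝ × ℝ => v p.1 * v p.2)
          (fun p hp => by
            rw [Finset.mem_filter, Finset.mem_product] at hp
            exact le_of_lt (mul_pos (hvpos _ hp.1.1) (hvpos _ hp.1.2))) hmem
  have hPpos : ∀ z ∈ prodSet Tf, 0 < z := by
    intro z hz
    rw [mem_prodSet] at hz
    obtain ⟨p1, hp1, p2, hp2, rfl⟩ := hz
    exact mul_pos (hTpos _ hp1) (hTpos _ hp2)
  have hkey : Sf = prodSet Tf := by
    apply exp_indep Sf (prodSet Tf) hSpos hPpos w γ hwpos hγpos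
    intro n
    rw [← haS n, ← haP n]
  constructor
  · rw [← hScard, hkey]
    exact prodSet_card_lower Tf hTpos hN hTcard
  · rw [← hScard, hkey]
    calc (prodSet Tf).card ≤ Tf.card * (Tf.card + 1) / 2 := prodSet_card_upper Tf
      _ = N * (N + 1) / 2 := by rw [hTcard]

lemma arith (M N : ℕ) (hM : 1 ≤ M) (hN : 1 ≤ N) :
    (2 * N - 1 ≤ M ∧ M ≤ N * (N + 1) / 2) ↔
      (⌈(Real.sqrt (8 * M + 1) - 1) / 2⌉ ≤ (N : ℤ) ∧ N ≤ (M + 1) / 2) := by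
  have h1 : 2 * N - 1 ≤ M ↔ N ≤ (M + 1) / 2 := by
    rw [Nat.le_div_iff_mul_le (by norm_num)]
    omega
  have h2 : M ≤ N * (N + 1) / 2 ↔ ⌈(Real.sqrt (8 * M + 1) - 1) / 2⌉ ≤ (N : ℤ) := by
    rw [Int.ceil_le, div_le_iff₀ (by norm_num : (0:ℝ) < 2), sub_le_iff_le_add]
    push_cast
    have key : Real.sqrt (8 * M + 1) ≤ (N:ℝ) * 2 + 1 ↔ (8 * M + 1 : ℝ) ≤ ((N:ℝ) * 2 + 1) ^ 2 := by
      constructor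
      · intro h
        calc (8 * M + 1 : ℝ) = Real.sqrt (8 * M + 1) ^ 2 := by
              rw [Real.sq_sqrt]; positivity
          _ ≤ ((N:ℝ) * 2 + 1) ^ 2 := by
              apply pow_le_pow_left₀ (Real.sqrt_nonneg _) h
      · intro h
        calc Real.sqrt (8 * M + 1) ≤ Real.sqrt (((N:ℝ) * 2 + 1) ^ 2) := Real.sqrt_le_sqrt h
          _ = (N:ℝ) * 2 + 1 := Real.sqrt_sq (by positivity)
    rw [key, show ((N:ℝ) * 2 + 1) ^ 2 = (((N * 2 + 1) ^ 2 : ℕ) : ℝ) by push_cast; ring,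
      show (8:ℝ) * M + 1 = ((8 * M + 1 : ℕ) : ℝ) by push_cast; ring, Nat.cast_le]
    constructor
    · intro h
      have := Nat.div_mul_le_self (N * (N + 1)) 2
      nlinarith [Nat.div_mul_le_self (N * (N + 1)) 2, h]
    · intro h
      rw [Nat.le_div_iff_mul_le (by norm_num)]
      nlinarith
  rw [h1, h2]
  tauto

theorem stmt17 (M N : ℕ) (hM : 1 ≤ M) (hN : 1 ≤ N) :
    ((∃ (a : ℕ → ℝ) (μ ν : Measure ℝ),
        IsRepMeas a μ ∧ msupport μ ⊆ Set.Ioi 0 ∧ (msupport μ).ncard = M ∧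
        IsRepMeas (fun n => Real.sqrt (a n)) ν ∧ msupport ν ⊆ Set.Ioi 0 ∧
        (msupport ν).ncard = N) ↔
      (2 * N - 1 ≤ M ∧ M ≤ N * (N + 1) / 2)) ∧
    ((2 * N - 1 ≤ M ∧ M ≤ N * (N + 1) / 2) ↔
      (⌈(Real.sqrt (8 * M + 1) - 1) / 2⌉ ≤ (N : ℤ) ∧ N ≤ (M + 1) / 2)) := by
  constructor
  · constructor
    · exact fun h => reverse M N hM hN h
    · exact fun h => forward M N hM hN h.1 h.2
  · exact arith M N hM hN
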